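/- (Balancing property of overlap weights.) Let Z ∈ {0,1}, X a covariate, and e(X) = P(Z = 1 | X) with 0 < e(X) < 1 almost surely. Then for every bounded measurable function h: E[ Z·(1 − e(X)) · h(X) ] = E[ (1−Z)·e(X) · h(X) ] = E[ e(X)(1 − e(X)) · h(X) ]. In particular, the overlap-weighted covariate distributions of the two arms are identical. -/

import Mathlib

open MeasureTheory

/-- Balancing property of overlap weights: for every bounded measurable `h`,
`E[Z(1-e(X)) h(X)] = E[(1-Z) e(X) h(X)] = E[e(X)(1-e(X)) h(X)]`. -/
theorem stmt_8 {Ω 𝓧 : Type*} [mΩ : MeasurableSpace Ω] [m𝓧 : MeasurableSpace 𝓧]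
    (μ : Measure Ω) [IsProbabilityMeasure μ]
    (X : Ω → 𝓧) (hX : Measurable X)
    (Z : Ω → ℝ) (hZ : Measurable Z) (hZbin : ∀ ω, Z ω = 0 ∨ Z ω = 1)
    (e : 𝓧 → ℝ)
    (he : (fun ω => e (X ω)) =ᵐ[μ] μ[Z | m𝓧.comap X])
    (hpos : ∀ x, 0 < e x ∧ e x < 1) :
    ∀ h : 𝓧 → ℝ, Measurable h → (∃ C, ∀ x, |h x| ≤ C) →
      (∫ ω, Z ω * (1 - e (X ω)) * h (X ω) ∂μ)
        = (∫ ω, (1 - Z ω) * e (X ω) * h (X ω) ∂μ) ∧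
      (∫ ω, (1 - Z ω) * e (X ω) * h (X ω) ∂μ)
        = ∫ ω, e (X ω) * (1 - e (X ω)) * h (X ω) ∂μ := by
  rintro h hh ⟨C, hC⟩
  set m : MeasurableSpace Ω := m𝓧.comap X with hm_def
  have hm : m ≤ mΩ := hX.comap_le
  set C' : ℝ := max C 0 with hC'_def
  have hC' : ∀ x, |h x| ≤ C' := fun x => (hC x).trans (le_max_left _ _)
  have hC'0 : 0 ≤ C' := le_max_right _ _
  have hZ1 : ∀ ω, |Z ω| ≤ 1 := by
    intro ω; rcases hZbin ω with hw | hw <;> simp [hw]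
  have hZm1 : ∀ ω, |1 - Z ω| ≤ 1 := by
    intro ω; rcases hZbin ω with hw | hw <;> simp [hw]
  have he1 : ∀ x, |e x| ≤ 1 := fun x =>
    abs_le.mpr ⟨by linarith [(hpos x).1], le_of_lt (hpos x).2⟩
  have hem1 : ∀ x, |1 - e x| ≤ 1 := fun x =>
    abs_le.mpr ⟨by linarith [(hpos x).2], by linarith [(hpos x).1]⟩
  -- measurability facts
  have hXm : @Measurable Ω 𝓧 m m𝓧 X := fun s hs => ⟨s, hs, rfl⟩
  have hhX : StronglyMeasurable[m] (fun ω => h (X ω)) := (hh.comp hXm).stronglyMeasurable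
  have hE : StronglyMeasurable[m] (μ[Z | m]) := stronglyMeasurable_condExp
  have heX : AEStronglyMeasurable[mΩ] (fun ω => e (X ω)) μ :=
    ((hE.mono hm).aestronglyMeasurable).congr he.symm
  have hhXa : AEStronglyMeasurable[mΩ] (fun ω => h (X ω)) μ := (hh.comp hX).aestronglyMeasurable
  have hZa : AEStronglyMeasurable[mΩ] Z μ := hZ.aestronglyMeasurable
  -- integrability helper
  have mk_int : ∀ (f : Ω → ℝ), AEStronglyMeasurable[mΩ] f μ → ∀ D : ℝ, (∀ ω, |f ω| ≤ D) →
      Integrable f μ := by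
    intro f hf D hD
    exact Integrable.mono' (integrable_const D) hf (Filter.Eventually.of_forall fun ω => by
      simpa using hD ω)
  have bnd : ∀ a b c : ℝ, |a| ≤ 1 → |b| ≤ C' → |c| ≤ 1 → |a * b * c| ≤ C' := by
    intro a b c ha hb hc
    rw [abs_mul, abs_mul]
    calc |a| * |b| * |c| ≤ 1 * C' * 1 :=
          mul_le_mul (mul_le_mul ha hb (abs_nonneg b) zero_le_one) hc (abs_nonneg c)
            (by simpa using hC'0)
      _ = C' := by ring
  have hZint : Integrable Z μ := mk_int Z hZa 1 hZ1
  -- key lemma: pull-out / projection property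
  have key : ∀ φ : Ω → ℝ, StronglyMeasurable[m] φ → Integrable (fun ω => φ ω * Z ω) μ →
      ∫ ω, φ ω * Z ω ∂μ = ∫ ω, φ ω * e (X ω) ∂μ := by
    intro φ hφ hφZ
    have h1 : μ[(φ * Z) | m] =ᵐ[μ] φ * μ[Z | m] :=
      condExp_mul_of_stronglyMeasurable_left hφ hφZ hZint
    calc ∫ ω, φ ω * Z ω ∂μ = ∫ ω, (μ[(φ * Z) | m]) ω ∂μ := (integral_condExp hm).symm
      _ = ∫ ω, φ ω * (μ[Z | m]) ω ∂μ := integral_congr_ae h1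
      _ = ∫ ω, φ ω * e (X ω) ∂μ := by
          refine integral_congr_ae ?_
          filter_upwards [he] with ω hω
          rw [hω]
  -- the two m-measurable versions of the weights
  set φ1 : Ω → ℝ := fun ω => (1 - (μ[Z | m]) ω) * h (X ω) with hφ1_def
  set φ2 : Ω → ℝ := fun ω => (μ[Z | m]) ω * h (X ω) with hφ2_def
  have hφ1 : StronglyMeasurable[m] φ1 := (stronglyMeasurable_const.sub hE).mul hhX
  have hφ2 : StronglyMeasurable[m] φ2 := hE.mul hhX
  -- integrabilities
  have int1 : Integrable (fun ω => (1 - e (X ω)) * h (X ω) * Z ω) μ :=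
    mk_int _ (((aestronglyMeasurable_const.sub heX).mul hhXa).mul hZa) C'
      (fun ω => bnd _ _ _ (hem1 (X ω)) (hC' (X ω)) (hZ1 ω))
  have int2 : Integrable (fun ω => e (X ω) * h (X ω) * Z ω) μ :=
    mk_int _ ((heX.mul hhXa).mul hZa) C'
      (fun ω => bnd _ _ _ (he1 (X ω)) (hC' (X ω)) (hZ1 ω))
  have int3 : Integrable (fun ω => e (X ω) * h (X ω)) μ :=
    mk_int _ (heX.mul hhXa) C'
      (fun ω => by
        have := bnd (e (X ω)) (h (X ω)) 1 (he1 (X ω)) (hC' (X ω)) (by norm_num)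
        simpa using this)
  have int4 : Integrable (fun ω => e (X ω) * h (X ω) * e (X ω)) μ :=
    mk_int _ ((heX.mul hhXa).mul heX) C'
      (fun ω => bnd _ _ _ (he1 (X ω)) (hC' (X ω)) (he1 (X ω)))
  have int1' : Integrable (fun ω => φ1 ω * Z ω) μ := by
    refine int1.congr ?_
    filter_upwards [he] with ω hω
    simp only [hφ1_def, ← hω]
  have int2' : Integrable (fun ω => φ2 ω * Z ω) μ := by
    refine int2.congr ?_
    filter_upwards [he] with ω hω
    simp only [hφ2_def, ← hω]
  -- left identity
  have hL : (∫ ω, Z ω * (1 - e (X ω)) * h (X ω) ∂μ)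
      = ∫ ω, e (X ω) * (1 - e (X ω)) * h (X ω) ∂μ := by
    calc ∫ ω, Z ω * (1 - e (X ω)) * h (X ω) ∂μ
        = ∫ ω, φ1 ω * Z ω ∂μ := by
          refine integral_congr_ae ?_
          filter_upwards [he] with ω hω
          simp only [hφ1_def, ← hω]; ring
      _ = ∫ ω, φ1 ω * e (X ω) ∂μ := key φ1 hφ1 int1'
      _ = ∫ ω, e (X ω) * (1 - e (X ω)) * h (X ω) ∂μ := by
          refine integral_congr_ae ?_
          filter_upwards [he] with ω hω
          simp only [hφ1_def, ← hω]; ring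
  -- the middle term via splitting
  have hmid : (∫ ω, e (X ω) * h (X ω) * Z ω ∂μ)
      = ∫ ω, e (X ω) * h (X ω) * e (X ω) ∂μ := by
    calc ∫ ω, e (X ω) * h (X ω) * Z ω ∂μ
        = ∫ ω, φ2 ω * Z ω ∂μ := by
          refine integral_congr_ae ?_
          filter_upwards [he] with ω hω
          simp only [hφ2_def, ← hω]
      _ = ∫ ω, φ2 ω * e (X ω) ∂μ := key φ2 hφ2 int2'
      _ = ∫ ω, e (X ω) * h (X ω) * e (X ω) ∂μ := by
          refine integral_congr_ae ?_
          filter_upwards [he] with ω hω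
          simp only [hφ2_def, ← hω]
  have hR : (∫ ω, (1 - Z ω) * e (X ω) * h (X ω) ∂μ)
      = ∫ ω, e (X ω) * (1 - e (X ω)) * h (X ω) ∂μ := by
    have e1 : (∫ ω, (1 - Z ω) * e (X ω) * h (X ω) ∂μ)
        = ∫ ω, (e (X ω) * h (X ω) - e (X ω) * h (X ω) * Z ω) ∂μ := by
      refine integral_congr_ae (Filter.Eventually.of_forall fun ω => ?_)
      ring
    have e2 : (∫ ω, e (X ω) * (1 - e (X ω)) * h (X ω) ∂μ)
        = ∫ ω, (e (X ω) * h (X ω) - e (X ω) * h (X ω) * e (X ω)) ∂μ := by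
      refine integral_congr_ae (Filter.Eventually.of_forall fun ω => ?_)
      ring
    rw [e1, e2, integral_sub int3 int2, integral_sub int3 int4, hmid]
  exact ⟨hL.trans hR.symm, hR⟩
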